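/- Rarefaction fan profile: let λ, ρ ∈ (0,∞)^d with λ ≠ ρ, and u_0(x) = min(λ·x, ρ·x) (equivalently, u_0(x) = λ·x when (ρ−λ)·x ≥ 0 and u_0(x) = ρ·x when (ρ−λ)·x ≤ 0). Then for every t > 0: (i) for every x with −t(ρ−λ)·∇f(ρ) < (ρ−λ)·x < −t(ρ−λ)·∇f(λ), there exists a unique s = s(x,t) ∈ (0,1) such that (ρ−λ)·x = −t(ρ−λ)·∇f(sλ + (1−s)ρ); (ii) u(x,t) = ρ·x + t·f(ρ) if (ρ−λ)·x ≤ −t(ρ−λ)·∇f(ρ); u(x,t) = (sλ + (1−s)ρ)·x + t·f(sλ + (1−s)ρ) with s = s(x,t) if −t(ρ−λ)·∇f(ρ) < (ρ−λ)·x < −t(ρ−λ)·∇f(λ); and u(x,t) = λ·x + t·f(λ) if (ρ−λ)·x ≥ −t(ρ−λ)·∇f(λ). -/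

import Mathlib

open Set Finset

noncomputable section

/-- `g(z) = c·(z₁⋯z_d)^{1/(d+1)}` (used only for `z ≥ 0`, where the product is `≥ 0`). -/
def gfun (c : ℝ) (d : ℕ) (z : Fin d → ℝ) : ℝ := c * (∏ i, z i) ^ (((d : ℝ) + 1)⁻¹)

/-- The set of values over which the Hopf-Lax supremum is taken. -/
def hlSet (c : ℝ) (d : ℕ) (u0 : (Fin d → ℝ) → ℝ) (x : Fin d → ℝ) (t : ℝ) : Set ℝ :=
  (fun y => u0 y + t * gfun c d (t⁻¹ • (x - y))) '' {y | y ≤ x}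

/-- The Hopf-Lax function `u(x,t)`, with `u(x,0) = u₀(x)`. -/
def hlu (c : ℝ) (d : ℕ) (u0 : (Fin d → ℝ) → ℝ) (x : Fin d → ℝ) (t : ℝ) : ℝ :=
  if t = 0 then u0 x else sSup (hlSet c d u0 x t)

/-- `κ = (c/(d+1))^{d+1}`. -/
def kap (c : ℝ) (d : ℕ) : ℝ := (c / ((d : ℝ) + 1)) ^ (d + 1)

/-- The velocity `f(ρ) = κ (ρ₁⋯ρ_d)⁻¹`. -/
def fvel (c : ℝ) (d : ℕ) (ρ : Fin d → ℝ) : ℝ := kap c d / ∏ i, ρ i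

/-- `(∇f(ρ))_i = −κ/((ρ₁⋯ρ_d) ρ_i)`. -/
def gradf (c : ℝ) (d : ℕ) (ρ : Fin d → ℝ) : Fin d → ℝ :=
  fun i => -(kap c d) / ((∏ j, ρ j) * ρ i)

/-- The interpolated slope `sλ + (1−s)ρ`. -/
def interp (d : ℕ) (l p : Fin d → ℝ) (s : ℝ) : Fin d → ℝ :=
  fun i => s * l i + (1 - s) * p i

/-- `(ρ−λ)·∇f(sλ+(1−s)ρ)`, the quantity governing the rarefaction fan. -/
def fanSpeed (c : ℝ) (d : ℕ) (l p : Fin d → ℝ) (s : ℝ) : ℝ :=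
  ∑ i, (p i - l i) * gradf c d (interp d l p s) i





lemma kap_pos {c : ℝ} (hc : 0 < c) (d : ℕ) : 0 < kap c d := by
  have : 0 < c / ((d:ℝ)+1) := by positivity
  exact pow_pos this _

lemma rf_amgm (c : ℝ) (d : ℕ) (hc : 0 < c) (σ z : Fin d → ℝ)
    (hσ : ∀ i, 0 < σ i) (hz : ∀ i, 0 ≤ z i) :
    gfun c d z ≤ (∑ i, σ i * z i) + kap c d / ∏ i, σ i := by
  have hQ : 0 < ∏ i, σ i := Finset.prod_pos fun i _ => hσ i
  set w : ℝ := ((d:ℝ)+1)⁻¹ with hw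
  have hdpos : (0:ℝ) < (d:ℝ)+1 := by positivity
  set v : Fin (d+1) → ℝ := Fin.snoc (fun i => σ i * z i) (kap c d / ∏ i, σ i) with hv
  have hvnn : ∀ i, 0 ≤ v i := by
    intro i
    refine Fin.lastCases ?_ ?_ i
    · simp only [hv, Fin.snoc_last]
      exact div_nonneg (kap_pos hc d).le hQ.le
    · intro j
      simp only [hv, Fin.snoc_castSucc]
      exact mul_nonneg (hσ j).le (hz j)
  have key : (∏ i : Fin (d+1), v i ^ w) ≤ ∑ i : Fin (d+1), w * v i :=
    Real.geom_mean_le_arith_mean_weighted Finset.univ (fun _ => w) v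
      (fun i _ => by positivity) (by
        rw [Finset.sum_const, Finset.card_univ, Fintype.card_fin, nsmul_eq_mul, hw]
        push_cast
        field_simp) (fun i _ => hvnn i)
  have hprod : ∏ i : Fin (d+1), v i ^ w = (kap c d * ∏ i, z i) ^ w := by
    rw [Real.finset_prod_rpow _ _ (fun i _ => hvnn i)]
    congr 1
    rw [Fin.prod_univ_castSucc]
    simp only [hv, Fin.snoc_castSucc, Fin.snoc_last]
    rw [Finset.prod_mul_distrib]
    field_simp
  have hsum : ∑ i : Fin (d+1), w * v i = w * ((∑ i, σ i * z i) + kap c d / ∏ i, σ i) := by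
    rw [← Finset.mul_sum]
    congr 1
    rw [Fin.sum_univ_castSucc]
    simp only [hv, Fin.snoc_castSucc, Fin.snoc_last]
  rw [hprod, hsum] at key
  have hkapw : (kap c d) ^ w = c / ((d:ℝ)+1) := by
    have hcast : ((d:ℝ)+1) = ((d+1 : ℕ) : ℝ) := by push_cast; ring
    rw [kap, hw, hcast]
    exact Real.pow_rpow_inv_natCast (by positivity) (Nat.succ_ne_zero d)
  have hmul : (kap c d * ∏ i, z i) ^ w = (c / ((d:ℝ)+1)) * (∏ i, z i) ^ w := by
    rw [Real.mul_rpow (kap_pos hc d).le (Finset.prod_nonneg fun i _ => hz i), hkapw]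
  rw [hmul] at key
  have key2 := mul_le_mul_of_nonneg_left key hdpos.le
  have hc1 : ((d:ℝ)+1) * (c / ((d:ℝ)+1)) = c := by field_simp
  calc gfun c d z = ((d:ℝ)+1) * (c / ((d:ℝ)+1) * (∏ i, z i) ^ w) := by
        rw [gfun, ← mul_assoc, hc1]
    _ ≤ ((d:ℝ)+1) * (w * ((∑ i, σ i * z i) + kap c d / ∏ i, σ i)) := key2
    _ = (∑ i, σ i * z i) + kap c d / ∏ i, σ i := by
        rw [hw, ← mul_assoc, mul_inv_cancel₀ hdpos.ne', one_mul]

lemma rf_value (c : ℝ) (d : ℕ) (hc : 0 < c) (σ : Fin d → ℝ) (hσ : ∀ i, 0 < σ i) :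
    gfun c d (fun i => kap c d / ((∏ j, σ j) * σ i))
      = (∑ i, σ i * (kap c d / ((∏ j, σ j) * σ i))) + kap c d / ∏ i, σ i := by
  have hQ : 0 < ∏ i, σ i := Finset.prod_pos fun i _ => hσ i
  have hk := kap_pos hc d
  have hdpos : (0:ℝ) < (d:ℝ)+1 := by positivity
  have hprod : ∏ i, kap c d / ((∏ j, σ j) * σ i)
      = (kap c d) ^ d / ((∏ j, σ j) ^ (d+1)) := by
    rw [Finset.prod_div_distrib, Finset.prod_const, Finset.card_univ, Fintype.card_fin,
      Finset.prod_mul_distrib, Finset.prod_const, Finset.card_univ, Fintype.card_fin,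
      pow_succ]
    
  have hrp : ((kap c d) ^ d / ((∏ j, σ j) ^ (d+1))) ^ (((d:ℝ)+1)⁻¹)
      = (c / ((d:ℝ)+1)) ^ d / (∏ j, σ j) := by
    rw [Real.div_rpow (by positivity) (by positivity)]
    have hcast : ((d:ℝ)+1) = ((d+1 : ℕ) : ℝ) := by push_cast; ring
    have h1 : (((∏ j, σ j) ^ (d+1) : ℝ)) ^ (((d:ℝ)+1)⁻¹) = ∏ j, σ j := by
      rw [hcast]
      exact Real.pow_rpow_inv_natCast hQ.le (Nat.succ_ne_zero d)
    have h2 : ((kap c d) ^ d : ℝ) ^ (((d:ℝ)+1)⁻¹) = (c / ((d:ℝ)+1)) ^ d := by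
      have hk2 : (kap c d) ^ d = ((c / ((d:ℝ)+1)) ^ d) ^ (d+1) := by
        rw [kap, ← pow_mul, ← pow_mul, Nat.mul_comm]
      rw [hk2, hcast]
      exact Real.pow_rpow_inv_natCast (by positivity) (Nat.succ_ne_zero d)
    rw [h1, h2]
  have hterm : ∀ i : Fin d, σ i * (kap c d / ((∏ j, σ j) * σ i)) = kap c d / ∏ j, σ j := by
    intro i
    have h1 := (hσ i).ne'
    field_simp
  have hsum : ∑ i, σ i * (kap c d / ((∏ j, σ j) * σ i)) = (d:ℝ) * (kap c d / ∏ j, σ j) := by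
    rw [Finset.sum_congr rfl fun i _ => hterm i, Finset.sum_const, Finset.card_univ,
      Fintype.card_fin, nsmul_eq_mul]
  rw [gfun, hprod, hrp, hsum]
  have hkk : kap c d = (c / ((d:ℝ)+1)) ^ d * (c / ((d:ℝ)+1)) := by rw [kap, pow_succ]
  rw [hkk]
  field_simp











lemma rf_key (d : ℕ) (c : ℝ) (hc : 0 < c) (l p : Fin d → ℝ) (t : ℝ) (ht : 0 < t)
    (x : Fin d → ℝ) (σ : Fin d → ℝ) (hσ : ∀ i, 0 < σ i) (s : ℝ) (hs0 : 0 ≤ s) (hs1 : s ≤ 1)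
    (hσdef : ∀ i, σ i = s * l i + (1 - s) * p i)
    (hmin : min (∑ i, l i * (x i - t * (kap c d / ((∏ j, σ j) * σ i))))
                (∑ i, p i * (x i - t * (kap c d / ((∏ j, σ j) * σ i))))
          = ∑ i, σ i * (x i - t * (kap c d / ((∏ j, σ j) * σ i)))) :
    hlu c d (fun z => min (∑ i, l i * z i) (∑ i, p i * z i)) x t
      = (∑ i, σ i * x i) + t * fvel c d σ := by
  have hQ : 0 < ∏ i, σ i := Finset.prod_pos fun i _ => hσ i
  have hk := kap_pos hc d
  set zs : Fin d → ℝ := fun i => kap c d / ((∏ j, σ j) * σ i) with hzs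
  have hzpos : ∀ i, 0 < zs i := fun i => div_pos hk (mul_pos hQ (hσ i))
  set ys : Fin d → ℝ := fun i => x i - t * zs i with hys
  have hyx : ys ≤ x := fun i => by
    simp only [hys]
    nlinarith [hzpos i]
  -- the value at ys
  have hinv : t⁻¹ • (x - ys) = zs := by
    funext i
    simp only [Pi.smul_apply, Pi.sub_apply, hys, smul_eq_mul]
    field_simp
    ring
  have hval : (fun z => min (∑ i, l i * z i) (∑ i, p i * z i)) ys
      + t * gfun c d (t⁻¹ • (x - ys)) = (∑ i, σ i * x i) + t * fvel c d σ := by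
    rw [hinv]
    simp only []
    rw [hmin, rf_value c d hc σ hσ]
    have e1 : ∑ i, σ i * (x i - t * (kap c d / ((∏ j, σ j) * σ i)))
        = (∑ i, σ i * x i) - (∑ i, σ i * (kap c d / ((∏ j, σ j) * σ i))) * t := by
      rw [Finset.sum_mul, ← Finset.sum_sub_distrib]
      exact Finset.sum_congr rfl fun i _ => by ring
    rw [e1, fvel]
    ring
  -- upper bound
  have hub : ∀ v ∈ hlSet c d (fun z => min (∑ i, l i * z i) (∑ i, p i * z i)) x t,
      v ≤ (∑ i, σ i * x i) + t * fvel c d σ := by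
    rintro v ⟨y, hy, rfl⟩
    simp only []
    have hznn : ∀ i, 0 ≤ (t⁻¹ • (x - y)) i := by
      intro i
      simp only [Pi.smul_apply, Pi.sub_apply, smul_eq_mul]
      have := hy i
      have h2 : 0 ≤ x i - y i := by linarith
      positivity
    have hg := rf_amgm c d hc σ (t⁻¹ • (x - y)) hσ hznn
    have hmin2 : min (∑ i, l i * y i) (∑ i, p i * y i) ≤ ∑ i, σ i * y i := by
      have hexp : ∑ i, σ i * y i
          = s * (∑ i, l i * y i) + (1 - s) * (∑ i, p i * y i) := by
        rw [Finset.mul_sum, Finset.mul_sum, ← Finset.sum_add_distrib]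
        refine Finset.sum_congr rfl fun i _ => ?_
        rw [hσdef i]; ring
      rw [hexp]
      have h1 := min_le_left (∑ i, l i * y i) (∑ i, p i * y i)
      have h2 := min_le_right (∑ i, l i * y i) (∑ i, p i * y i)
      nlinarith [mul_le_mul_of_nonneg_left h1 hs0,
        mul_le_mul_of_nonneg_left h2 (by linarith : (0:ℝ) ≤ 1 - s)]
    have hsz : t * (∑ i, σ i * (t⁻¹ • (x - y)) i) = ∑ i, σ i * (x i - y i) := by
      rw [Finset.mul_sum]
      refine Finset.sum_congr rfl fun i _ => ?_
      simp only [Pi.smul_apply, Pi.sub_apply, smul_eq_mul]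
      field_simp
    have hgb : t * gfun c d (t⁻¹ • (x - y))
        ≤ (∑ i, σ i * (x i - y i)) + t * (kap c d / ∏ i, σ i) := by
      calc t * gfun c d (t⁻¹ • (x - y))
          ≤ t * ((∑ i, σ i * (t⁻¹ • (x - y)) i) + kap c d / ∏ i, σ i) :=
            mul_le_mul_of_nonneg_left hg ht.le
        _ = (∑ i, σ i * (x i - y i)) + t * (kap c d / ∏ i, σ i) := by
            rw [mul_add, hsz]
    have hsplit : (∑ i, σ i * y i) + (∑ i, σ i * (x i - y i)) = ∑ i, σ i * x i := by
      rw [← Finset.sum_add_distrib]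
      exact Finset.sum_congr rfl fun i _ => by ring
    calc min (∑ i, l i * y i) (∑ i, p i * y i) + t * gfun c d (t⁻¹ • (x - y))
        ≤ (∑ i, σ i * y i) + ((∑ i, σ i * (x i - y i)) + t * (kap c d / ∏ i, σ i)) :=
          add_le_add hmin2 hgb
      _ = (∑ i, σ i * x i) + t * fvel c d σ := by
          rw [fvel, ← hsplit]; ring
  have hmem : (∑ i, σ i * x i) + t * fvel c d σ
      ∈ hlSet c d (fun z => min (∑ i, l i * z i) (∑ i, p i * z i)) x t := by
    exact ⟨ys, hyx, hval⟩
  rw [hlu, if_neg ht.ne']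
  exact le_antisymm (csSup_le ⟨_, hmem⟩ hub) (le_csSup ⟨_, hub⟩ hmem)







lemma rf_alg (K P a b S : ℝ) (hP : P ≠ 0) (ha : a ≠ 0) :
    (K * b) * (-((-P * S) * a + P * (-b)) / (P * a) ^ 2)
      = (K / P) * ((b / a) * S + (b / a) ^ 2) := by
  field_simp
  ring


lemma rf_phi (c : ℝ) (d : ℕ) (l p : Fin d → ℝ) (t : ℝ) (s : ℝ) :
    -t * fanSpeed c d l p s
      = ∑ i, (t * kap c d * (p i - l i)) *
          ((∏ j, (s * l j + (1 - s) * p j)) * (s * l i + (1 - s) * p i))⁻¹ := by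
  rw [fanSpeed, Finset.mul_sum]
  refine Finset.sum_congr rfl fun i _ => ?_
  simp only [gradf, interp, div_eq_mul_inv]
  ring

lemma rf_strictMono (c : ℝ) (d : ℕ) (hc : 0 < c) (l p : Fin d → ℝ)
    (hl : ∀ i, 0 < l i) (hp : ∀ i, 0 < p i) (hlp : l ≠ p) (t : ℝ) (ht : 0 < t) :
    StrictMonoOn (fun s => -t * fanSpeed c d l p s) (Icc (0:ℝ) 1) ∧
    ContinuousOn (fun s => -t * fanSpeed c d l p s) (Icc (0:ℝ) 1) := by
  have hk := kap_pos hc d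
  set A : Fin d → ℝ → ℝ := fun i s => s * l i + (1 - s) * p i with hA
  have hApos : ∀ s ∈ Icc (0:ℝ) 1, ∀ i, 0 < A i s := by
    rintro s ⟨h0, h1⟩ i
    rcases eq_or_lt_of_le h0 with h|h
    · simp only [hA, ← h]; simpa using hp i
    · have : 0 ≤ (1 - s) * p i := mul_nonneg (by linarith) (hp i).le
      have : 0 < s * l i := mul_pos h (hl i)
      simp only [hA]; nlinarith [mul_nonneg (by linarith : (0:ℝ) ≤ 1 - s) (hp i).le]
  -- derivative of A i
  have hdA : ∀ i s, HasDerivAt (A i) (l i - p i) s := by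
    intro i s
    have h1 : HasDerivAt (fun s : ℝ => s * l i) (1 * l i) s := (hasDerivAt_id s).mul_const _
    have h2 : HasDerivAt (fun s : ℝ => (1 - s) * p i) ((0 - 1) * p i) s :=
      (((hasDerivAt_const s (1:ℝ)).sub (hasDerivAt_id s))).mul_const _
    have : HasDerivAt (fun s => s * l i + (1 - s) * p i) _ s := h1.add h2
    convert this using 1
    ring
  have hdP : ∀ s, HasDerivAt (fun s => ∏ j, A j s)
      (∑ j, (∏ k ∈ Finset.univ.erase j, A k s) • (l j - p j)) s := by
    intro s
    exact HasDerivAt.fun_finsetProd (fun j _ => hdA j s)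
  -- derivative of the full function
  have hder : ∀ s, (∀ i, 0 < A i s) → HasDerivAt (fun s => -t * fanSpeed c d l p s)
      (∑ i, (t * kap c d * (p i - l i)) *
        (-((∑ j, (∏ k ∈ Finset.univ.erase j, A k s) • (l j - p j)) * A i s
            + (∏ j, A j s) * (l i - p i)) / ((∏ j, A j s) * A i s) ^ 2)) s := by
    intro s hs
    have hne : ∀ i, (∏ j, A j s) * A i s ≠ 0 := by
      intro i
      have hQ : 0 < ∏ j, A j s := Finset.prod_pos fun j _ => hs j
      exact (mul_pos hQ (hs i)).ne'
    have hterm : ∀ i : Fin d, HasDerivAt (fun s => (t * kap c d * (p i - l i)) *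
        ((∏ j, A j s) * A i s)⁻¹)
        ((t * kap c d * (p i - l i)) *
          (-((∑ j, (∏ k ∈ Finset.univ.erase j, A k s) • (l j - p j)) * A i s
              + (∏ j, A j s) * (l i - p i)) / ((∏ j, A j s) * A i s) ^ 2)) s := by
      intro i
      exact (((hdP s).mul (hdA i s)).inv (hne i)).const_mul _
    have hsum := HasDerivAt.fun_sum (fun i (_ : i ∈ Finset.univ) => hterm i)
    have heq : (fun s => -t * fanSpeed c d l p s)
        = fun s => ∑ i, (t * kap c d * (p i - l i)) * ((∏ j, A j s) * A i s)⁻¹ := by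
      funext s
      exact rf_phi c d l p t s
    rw [heq]
    exact hsum
  -- positivity of derivative
  have hpos : ∀ s, (∀ i, 0 < A i s) →
      0 < ∑ i, (t * kap c d * (p i - l i)) *
        (-((∑ j, (∏ k ∈ Finset.univ.erase j, A k s) • (l j - p j)) * A i s
            + (∏ j, A j s) * (l i - p i)) / ((∏ j, A j s) * A i s) ^ 2) := by
    intro s hs
    have hQ : 0 < ∏ j, A j s := Finset.prod_pos fun j _ => hs j
    set S : ℝ := ∑ j, (p j - l j) / A j s with hS
    have hPder : (∑ j, (∏ k ∈ Finset.univ.erase j, A k s) • (l j - p j))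
        = -(∏ j, A j s) * S := by
      rw [hS, Finset.mul_sum]
      refine Finset.sum_congr rfl fun j _ => ?_
      have herase : (∏ k ∈ Finset.univ.erase j, A k s) = (∏ k, A k s) / A j s := by
        rw [eq_div_iff (hs j).ne']
        exact Finset.prod_erase_mul _ _ (Finset.mem_univ j)
      rw [herase, smul_eq_mul]
      field_simp
      ring
    have htermeq : ∀ i : Fin d, (t * kap c d * (p i - l i)) *
        (-((∑ j, (∏ k ∈ Finset.univ.erase j, A k s) • (l j - p j)) * A i s
            + (∏ j, A j s) * (l i - p i)) / ((∏ j, A j s) * A i s) ^ 2)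
        = (t * kap c d / (∏ j, A j s)) *
            (((p i - l i) / A i s) * S + ((p i - l i) / A i s) ^ 2) := by
      intro i
      rw [hPder]
      have hneg : l i - p i = -(p i - l i) := by ring
      rw [hneg]
      exact rf_alg (t * kap c d) _ _ _ _ hQ.ne' (hs i).ne'
    rw [Finset.sum_congr rfl fun i _ => htermeq i, ← Finset.mul_sum]
    have hfac : 0 < t * kap c d / (∏ j, A j s) := by positivity
    refine mul_pos hfac ?_
    have hsplit : ∑ i, (((p i - l i) / A i s) * S + ((p i - l i) / A i s) ^ 2)
        = S * S + ∑ i, ((p i - l i) / A i s) ^ 2 := by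
      rw [Finset.sum_add_distrib, ← Finset.sum_mul, ← hS]
    rw [hsplit]
    have hex : ∃ i, p i ≠ l i := by
      by_contra h
      push_neg at h
      exact hlp (funext fun i => (h i).symm)
    obtain ⟨i0, hi0⟩ := hex
    have hsq : 0 < ∑ i, ((p i - l i) / A i s) ^ 2 := by
      refine Finset.sum_pos' (fun i _ => sq_nonneg _) ⟨i0, Finset.mem_univ i0, ?_⟩
      have : (p i0 - l i0) / A i0 s ≠ 0 :=
        div_ne_zero (sub_ne_zero.mpr hi0) (hs i0).ne'
      positivity
    nlinarith [mul_self_nonneg S]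
  constructor
  · refine strictMonoOn_of_deriv_pos (convex_Icc 0 1) ?_ ?_
    · intro s hs
      exact ((hder s (hApos s hs)).continuousAt).continuousWithinAt
    · intro s hs
      rw [interior_Icc] at hs
      have hs' : s ∈ Icc (0:ℝ) 1 := ⟨hs.1.le, hs.2.le⟩
      rw [(hder s (hApos s hs')).deriv]
      exact hpos s (hApos s hs')
  · intro s hs
    exact ((hder s (hApos s hs)).continuousAt).continuousWithinAt


lemma rf_D (c : ℝ) (d : ℕ) (l p : Fin d → ℝ) (t : ℝ) (x : Fin d → ℝ) (s : ℝ)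
    (σ : Fin d → ℝ) (hσ : σ = interp d l p s) :
    ∑ i, (p i - l i) * (x i - t * (kap c d / ((∏ j, σ j) * σ i)))
      = (∑ i, (p i - l i) * x i) + t * fanSpeed c d l p s := by
  subst hσ
  rw [fanSpeed, Finset.mul_sum, ← Finset.sum_add_distrib]
  refine Finset.sum_congr rfl fun i _ => ?_
  simp only [gradf, div_eq_mul_inv]
  ring

lemma rf_sub (d : ℕ) (l p y : Fin d → ℝ) :
    (∑ i, p i * y i) - (∑ i, l i * y i) = ∑ i, (p i - l i) * y i := by
  rw [← Finset.sum_sub_distrib]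
  exact Finset.sum_congr rfl fun i _ => by ring

lemma rf_exp (d : ℕ) (l p : Fin d → ℝ) (s : ℝ) (y : Fin d → ℝ) :
    ∑ i, interp d l p s i * y i
      = s * (∑ i, l i * y i) + (1 - s) * (∑ i, p i * y i) := by
  rw [Finset.mul_sum, Finset.mul_sum, ← Finset.sum_add_distrib]
  refine Finset.sum_congr rfl fun i _ => ?_
  simp only [interp]
  ring

lemma rf_interp_pos (d : ℕ) (l p : Fin d → ℝ) (hl : ∀ i, 0 < l i) (hp : ∀ i, 0 < p i)
    (s : ℝ) (hs0 : 0 ≤ s) (hs1 : s ≤ 1) : ∀ i, 0 < interp d l p s i := by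
  intro i
  rcases eq_or_lt_of_le hs0 with h|h
  · simp only [interp, ← h]
    simpa using hp i
  · have h1 : 0 < s * l i := mul_pos h (hl i)
    have h2 : 0 ≤ (1 - s) * p i := mul_nonneg (by linarith) (hp i).le
    simp only [interp]
    linarith

/-- Rarefaction fan profile: for `u₀(x) = min(λ·x, ρ·x)` with `λ ≠ ρ` in `(0,∞)^d` and
`t > 0`: (i) in the strip `−t(ρ−λ)·∇f(ρ) < (ρ−λ)·x < −t(ρ−λ)·∇f(λ)` there is a unique
`s ∈ (0,1)` with `(ρ−λ)·x = −t(ρ−λ)·∇f(sλ+(1−s)ρ)`; (ii) `u(x,t)` equals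
`ρ·x + t f(ρ)`, `(sλ+(1−s)ρ)·x + t f(sλ+(1−s)ρ)`, or `λ·x + t f(λ)` in the three
regions. -/
theorem rarefaction_profile
    (d : ℕ) (hd : 1 ≤ d) (c : ℝ) (hc : 0 < c)
    (l p : Fin d → ℝ) (hl : ∀ i, 0 < l i) (hp : ∀ i, 0 < p i) (hlp : l ≠ p) :
    ∀ (t : ℝ), 0 < t →
      -- (i) existence and uniqueness of s(x,t) in the fan
      (∀ x : Fin d → ℝ,
          -t * fanSpeed c d l p 0 < (∑ i, (p i - l i) * x i) →
          (∑ i, (p i - l i) * x i) < -t * fanSpeed c d l p 1 →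
          ∃! s : ℝ, s ∈ Set.Ioo (0 : ℝ) 1 ∧
            (∑ i, (p i - l i) * x i) = -t * fanSpeed c d l p s) ∧
      -- (ii) the three-region formula for u(x,t)
      (∀ x : Fin d → ℝ,
          ((∑ i, (p i - l i) * x i) ≤ -t * fanSpeed c d l p 0 →
            hlu c d (fun z => min (∑ i, l i * z i) (∑ i, p i * z i)) x t =
              (∑ i, p i * x i) + t * fvel c d p) ∧
          (∀ s : ℝ, s ∈ Set.Ioo (0 : ℝ) 1 →
            (∑ i, (p i - l i) * x i) = -t * fanSpeed c d l p s →
            hlu c d (fun z => min (∑ i, l i * z i) (∑ i, p i * z i)) x t =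
              (∑ i, interp d l p s i * x i) + t * fvel c d (interp d l p s)) ∧
          ((∑ i, (p i - l i) * x i) ≥ -t * fanSpeed c d l p 1 →
            hlu c d (fun z => min (∑ i, l i * z i) (∑ i, p i * z i)) x t =
              (∑ i, l i * x i) + t * fvel c d l)) := by
  intro t ht
  obtain ⟨hmono, hcont⟩ := rf_strictMono c d hc l p hl hp hlp t ht
  constructor
  · -- (i) existence and uniqueness
    intro x h0 h1
    have hIoo : (∑ i, (p i - l i) * x i) ∈
        Ioo ((fun s => -t * fanSpeed c d l p s) 0) ((fun s => -t * fanSpeed c d l p s) 1) :=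
      ⟨h0, h1⟩
    obtain ⟨s, hs, hΦs⟩ := intermediate_value_Ioo (by norm_num : (0:ℝ) ≤ 1) hcont hIoo
    refine ⟨s, ⟨hs, hΦs.symm⟩, ?_⟩
    rintro s' ⟨hs', he'⟩
    exact hmono.injOn (Ioo_subset_Icc_self hs') (Ioo_subset_Icc_self hs)
      (he'.symm.trans hΦs.symm)
  · -- (ii) the three regions
    intro x
    refine ⟨?_, ?_, ?_⟩
    · -- left region: σ = p
      intro hx
      have hip : p = interp d l p 0 := by
        funext i
        simp [interp]
      have hD := rf_D c d l p t x 0 p hip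
      have hmin : min (∑ i, l i * (x i - t * (kap c d / ((∏ j, p j) * p i))))
            (∑ i, p i * (x i - t * (kap c d / ((∏ j, p j) * p i))))
          = ∑ i, p i * (x i - t * (kap c d / ((∏ j, p j) * p i))) := by
        refine min_eq_right ?_
        have hsub := rf_sub d l p (fun i => x i - t * (kap c d / ((∏ j, p j) * p i)))
        nlinarith [hD, hx, hsub]
      exact rf_key d c hc l p t ht x p hp 0 le_rfl zero_le_one
        (fun i => by ring) hmin
    · -- middle region: σ = interp s
      intro s hs hx
      set σ : Fin d → ℝ := interp d l p s with hσe
      have hσpos := rf_interp_pos d l p hl hp s hs.1.le hs.2.le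
      have hD := rf_D c d l p t x s σ hσe
      set y : Fin d → ℝ := fun i => x i - t * (kap c d / ((∏ j, σ j) * σ i)) with hy
      have hD0 : ∑ i, (p i - l i) * y i = 0 := by
        rw [hy]
        simp only []
        rw [hD, hx]
        ring
      have hsub := rf_sub d l p y
      have hLP : (∑ i, p i * y i) = (∑ i, l i * y i) := by linarith [hsub, hD0]
      have hσy : ∑ i, σ i * y i = ∑ i, l i * y i := by
        rw [hσe, rf_exp d l p s y, hLP]
        ring
      have hmin : min (∑ i, l i * y i) (∑ i, p i * y i) = ∑ i, σ i * y i := by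
        rw [hLP, min_self, hσy]
      exact rf_key d c hc l p t ht x σ hσpos s hs.1.le hs.2.le
        (fun i => rfl) hmin
    · -- right region: σ = l
      intro hx
      have hip : l = interp d l p 1 := by
        funext i
        simp [interp]
      have hD := rf_D c d l p t x 1 l hip
      have hmin : min (∑ i, l i * (x i - t * (kap c d / ((∏ j, l j) * l i))))
            (∑ i, p i * (x i - t * (kap c d / ((∏ j, l j) * l i))))
          = ∑ i, l i * (x i - t * (kap c d / ((∏ j, l j) * l i))) := by
        refine min_eq_left ?_
        have hsub := rf_sub d l p (fun i => x i - t * (kap c d / ((∏ j, l j) * l i)))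
        nlinarith [hD, hx, hsub]
      exact rf_key d c hc l p t ht x l hl 1 zero_le_one le_rfl
        (fun i => by ring) hmin

end
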